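/- (Almost-sure reachability in finite Markov chains) Let Q be a finite nonempty set, κ : Q → PMF Q a transition function, and T ⊆ Q. Call a nonempty set U ⊆ Q a closed recurrent set if the support of κ(q) is contained in U for every q ∈ U and the directed graph on U with edges {(q,q') ∈ U × U | κ(q)(q') > 0} is strongly connected. If every closed recurrent set intersects T, then for every start state s ∈ Q, P_s({ρ | ∃ n, ρ_n ∈ T}) = 1. -/

import Mathlib

open MeasureTheory Filter
open scoped Classical ENNReal

namespace MPP

variable {Q : Type}

/-- Probability that a Markov chain with transition function `κ` traverses the finite
sequence `future` starting from `q`. -/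
noncomputable def chainPathProb (κ : Q → PMF Q) : Q → List Q → ℝ≥0∞
  | _, [] => 1
  | q, q' :: rest => κ q q' * chainPathProb κ q' rest

/-- `μ` is the trajectory measure (Ionescu–Tulcea) of the Markov chain `κ` started at
`q`: it is the (unique) probability measure on `ℕ → Q` (product σ-algebra) giving
every cylinder its product probability. -/
def IsChainTrajMeasure [MeasurableSpace Q] (κ : Q → PMF Q) (q : Q)
    (μ : Measure (ℕ → Q)) : Prop :=
  IsProbabilityMeasure μ ∧
    ∀ (n : ℕ) (f : ℕ → Q),
      μ {ρ | ∀ i ≤ n, ρ i = f i} =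
        if f 0 = q then chainPathProb κ q ((List.range n).map fun i => f (i + 1)) else 0

/-- Energy level of the length-`n` prefix of a play. -/
def EL (w : Q → Q → ℤ) (ρ : ℕ → Q) (n : ℕ) : ℤ :=
  ∑ i ∈ Finset.range n, w (ρ i) (ρ (i + 1))

/-- Energy objective with initial credit `c₀`. -/
def PosEnergy (w : Q → Q → ℤ) (c₀ : ℕ) : Set (ℕ → Q) :=
  {ρ | ∀ n, 0 ≤ (c₀ : ℤ) + EL w ρ n}

/-- A closed recurrent set of a Markov chain: nonempty, closed under transitions, and
strongly connected via positive-probability transitions. -/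
def IsClosedRecurrent (κ : Q → PMF Q) (U : Set Q) : Prop :=
  U.Nonempty ∧ (∀ q ∈ U, (κ q).support ⊆ U) ∧
    ∀ q ∈ U, ∀ q' ∈ U,
      Relation.ReflTransGen (fun a b => a ∈ U ∧ b ∈ U ∧ κ a b ≠ 0) q q'

section Aux

variable [Fintype Q] (κ : Q → PMF Q) (T : Set Q)

/-- Probability of avoiding `T` during the first `n` steps (including time 0). -/
noncomputable def avoidP : ℕ → Q → ℝ≥0∞
  | 0, q => if q ∈ T then 0 else 1
  | n + 1, q => if q ∈ T then 0 else ∑ q' : Q, κ q q' * avoidP n q'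

lemma kappa_sum (q : Q) : ∑ q' : Q, κ q q' = 1 := by
  have h := (κ q).tsum_coe
  rwa [tsum_fintype] at h

lemma avoidP_le_one : ∀ n q, avoidP κ T n q ≤ 1
  | 0, q => by unfold avoidP; split <;> simp
  | n + 1, q => by
    unfold avoidP
    split
    · simp
    · calc ∑ q' : Q, κ q q' * avoidP κ T n q' ≤ ∑ q' : Q, κ q q' * 1 :=
        Finset.sum_le_sum fun i _ => mul_le_mul_right (avoidP_le_one n i) _
      _ = 1 := by simp [kappa_sum κ]

lemma avoidP_of_mem {q : Q} (hq : q ∈ T) : ∀ n, avoidP κ T n q = 0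
  | 0 => by simp [avoidP, hq]
  | n + 1 => by simp [avoidP, hq]

lemma avoidP_succ_le : ∀ n q, avoidP κ T (n + 1) q ≤ avoidP κ T n q
  | 0, q => by
    by_cases hq : q ∈ T
    · simp [avoidP_of_mem κ T hq]
    · have h := avoidP_le_one κ T 1 q
      calc avoidP κ T 1 q ≤ 1 := h
        _ = avoidP κ T 0 q := by simp [avoidP, hq]
  | n + 1, q => by
    by_cases hq : q ∈ T
    · simp [avoidP_of_mem κ T hq]
    · show avoidP κ T (n + 1 + 1) q ≤ avoidP κ T (n + 1) q
      rw [show avoidP κ T (n + 1 + 1) q = ∑ q' : Q, κ q q' * avoidP κ T (n + 1) q' from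
        by simp [avoidP, hq],
        show avoidP κ T (n + 1) q = ∑ q' : Q, κ q q' * avoidP κ T n q' from by simp [avoidP, hq]]
      exact Finset.sum_le_sum fun i _ => mul_le_mul_right (avoidP_succ_le n i) _

lemma avoidP_antitone (q : Q) : Antitone fun n => avoidP κ T n q :=
  antitone_nat_of_succ_le fun n => avoidP_succ_le κ T n q

/-- Maximal avoidance probability over all states. -/
noncomputable def Mb (n : ℕ) : ℝ≥0∞ := Finset.univ.sup (avoidP κ T n)

lemma avoidP_le_Mb (n : ℕ) (q : Q) : avoidP κ T n q ≤ Mb κ T n :=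
  Finset.le_sup (Finset.mem_univ q)

lemma Mb_le_one (n : ℕ) : Mb κ T n ≤ 1 :=
  Finset.sup_le fun q _ => avoidP_le_one κ T n q

lemma avoidP_add : ∀ m n q, avoidP κ T (m + n) q ≤ Mb κ T n * avoidP κ T m q
  | 0, n, q => by
    by_cases hq : q ∈ T
    · simp [avoidP_of_mem κ T hq]
    · have h1 : avoidP κ T 0 q = 1 := by simp [avoidP, hq]
      rw [zero_add, h1, mul_one]
      exact avoidP_le_Mb κ T n q
  | m + 1, n, q => by
    have hmn : m + 1 + n = (m + n) + 1 := by omega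
    rw [hmn]
    by_cases hq : q ∈ T
    · simp [avoidP_of_mem κ T hq]
    · rw [show avoidP κ T ((m + n) + 1) q = ∑ q' : Q, κ q q' * avoidP κ T (m + n) q' from
        by simp [avoidP, hq],
        show avoidP κ T (m + 1) q = ∑ q' : Q, κ q q' * avoidP κ T m q' from by simp [avoidP, hq],
        Finset.mul_sum]
      refine Finset.sum_le_sum fun i _ => ?_
      calc κ q i * avoidP κ T (m + n) i ≤ κ q i * (Mb κ T n * avoidP κ T m i) :=
        mul_le_mul_right (avoidP_add m n i) _
        _ = Mb κ T n * (κ q i * avoidP κ T m i) := by ring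

lemma Mb_add (m n : ℕ) : Mb κ T (m + n) ≤ Mb κ T n * Mb κ T m := by
  refine Finset.sup_le fun q _ => ?_
  exact (avoidP_add κ T m n q).trans (mul_le_mul_right (avoidP_le_Mb κ T m q) _)

lemma Mb_pow (N : ℕ) : ∀ k, Mb κ T (k * N) ≤ (Mb κ T N) ^ k
  | 0 => by simpa using Mb_le_one κ T 0
  | k + 1 => by
    have h1 : (k + 1) * N = k * N + N := by ring
    rw [h1, pow_succ]
    calc Mb κ T (k * N + N) ≤ Mb κ T N * Mb κ T (k * N) := Mb_add κ T (k * N) N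
      _ ≤ Mb κ T N * (Mb κ T N) ^ k := mul_le_mul_right (Mb_pow N k) _
      _ = (Mb κ T N) ^ k * Mb κ T N := mul_comm _ _

lemma restrict_reach {κ : Q → PMF Q} (U : Set Q)
    (hU : ∀ x ∈ U, ∀ y : Q, κ x y ≠ 0 → y ∈ U) {c c' : Q} (hc : c ∈ U)
    (h : Relation.ReflTransGen (fun a b => κ a b ≠ 0) c c') :
    c' ∈ U ∧ Relation.ReflTransGen (fun a b => a ∈ U ∧ b ∈ U ∧ κ a b ≠ 0) c c' := by
  induction h with
  | refl => exact ⟨hc, .refl⟩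
  | tail _ h2 ih => exact ⟨hU _ ih.1 _ h2, ih.2.tail ⟨ih.1, hU _ ih.1 _ h2, h2⟩⟩

lemma exists_reach_T (hT : ∀ U : Set Q, IsClosedRecurrent κ U → (U ∩ T).Nonempty) (q : Q) :
    ∃ t ∈ T, Relation.ReflTransGen (fun a b => κ a b ≠ 0) q t := by
  set step : Q → Q → Prop := fun a b => κ a b ≠ 0 with hstep
  set RS : Q → Finset Q := fun a => Finset.univ.filter (fun b => Relation.ReflTransGen step a b)
    with hRS
  have hmemRS : ∀ a b : Q, b ∈ RS a ↔ Relation.ReflTransGen step a b := by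
    intro a b; simp [hRS]
  obtain ⟨b, hbq, hbmin⟩ := Finset.exists_min_image (RS q) (fun c => (RS c).card)
    ⟨q, (hmemRS q q).2 .refl⟩
  have hUclosed : ∀ x ∈ (↑(RS b) : Set Q), ∀ y : Q, κ x y ≠ 0 → y ∈ (↑(RS b) : Set Q) := by
    intro x hx y hy
    have hx' : x ∈ RS b := by simpa using hx
    have : y ∈ RS b := (hmemRS b y).2 (((hmemRS b x).1 hx').tail hy)
    simpa using this
  have hUrec : IsClosedRecurrent κ (↑(RS b) : Set Q) := by
    refine ⟨⟨b, by simpa using (hmemRS b b).2 .refl⟩, ?_, ?_⟩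
    · intro x hx y hy
      exact hUclosed x hx y ((PMF.mem_support_iff _ _).1 hy)
    · intro c hcm c' hcm'
      have hc : c ∈ RS b := by simpa using hcm
      have hc' : c' ∈ RS b := by simpa using hcm'
      have hsub : RS c ⊆ RS b := by
        intro x hx
        exact (hmemRS b x).2 (((hmemRS b c).1 hc).trans ((hmemRS c x).1 hx))
      have hcq : c ∈ RS q := (hmemRS q c).2 (((hmemRS q b).1 hbq).trans ((hmemRS b c).1 hc))
      have heq : RS c = RS b := Finset.eq_of_subset_of_card_le hsub (hbmin c hcq)
      have hreach : Relation.ReflTransGen step c c' := (hmemRS c c').1 (heq ▸ hc')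
      exact (restrict_reach (↑(RS b) : Set Q) hUclosed hcm hreach).2
  obtain ⟨t, htU, htT⟩ := hT _ hUrec
  refine ⟨t, htT, ((hmemRS q b).1 hbq).trans ((hmemRS b t).1 (by simpa using htU))⟩

lemma exists_avoidP_lt_one (hT : ∀ U : Set Q, IsClosedRecurrent κ U → (U ∩ T).Nonempty)
    (q : Q) : ∃ n, avoidP κ T n q < 1 := by
  obtain ⟨t, htT, hreach⟩ := exists_reach_T κ T hT q
  induction hreach using Relation.ReflTransGen.head_induction_on with
  | refl => exact ⟨0, by simp [avoidP, htT]⟩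
  | @head a c h' h ih =>
    obtain ⟨n, hn⟩ := ih
    refine ⟨n + 1, ?_⟩
    by_cases ha : a ∈ T
    · simp [avoidP, ha]
    · rw [show avoidP κ T (n + 1) a = ∑ q' : Q, κ a q' * avoidP κ T n q' from
        by simp [avoidP, ha]]
      have herase : ∀ f : Q → ℝ≥0∞, ∑ q' : Q, f q' = f c + ∑ q' ∈ Finset.univ.erase c, f q' :=
        fun f => (Finset.add_sum_erase _ f (Finset.mem_univ c)).symm
      rw [herase (fun q' => κ a q' * avoidP κ T n q'), ← kappa_sum κ a, herase (fun q' => κ a q')]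
      have h1 : ∑ q' ∈ Finset.univ.erase c, κ a q' * avoidP κ T n q' ≤
          ∑ q' ∈ Finset.univ.erase c, κ a q' := by
        refine Finset.sum_le_sum fun i _ => ?_
        calc κ a i * avoidP κ T n i ≤ κ a i * 1 := mul_le_mul_right (avoidP_le_one κ T n i) _
          _ = κ a i := mul_one _
      have hne : ∑ q' ∈ Finset.univ.erase c, κ a q' ≠ ⊤ := by
        refine ne_top_of_le_ne_top (by simp : (1 : ℝ≥0∞) ≠ ⊤) ?_
        rw [← kappa_sum κ a]
        exact Finset.sum_le_sum_of_subset (Finset.erase_subset _ _)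
      have h2 : κ a c * avoidP κ T n c < κ a c := by
        calc κ a c * avoidP κ T n c < κ a c * 1 :=
          (ENNReal.mul_lt_mul_iff_right h' (PMF.apply_ne_top _ _)).2 hn
          _ = κ a c := mul_one _
      calc κ a c * avoidP κ T n c + ∑ q' ∈ Finset.univ.erase c, κ a q' * avoidP κ T n q' ≤
          κ a c * avoidP κ T n c + ∑ q' ∈ Finset.univ.erase c, κ a q' := add_le_add_right h1 _
        _ < κ a c + ∑ q' ∈ Finset.univ.erase c, κ a q' := ENNReal.add_lt_add_right hne h2

/-- Extension of a finite word to an infinite one. -/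
def extd (n : ℕ) (d : Fin (n + 1) → Q) (i : ℕ) : Q :=
  d ⟨min i n, lt_of_le_of_lt (min_le_right _ _) (Nat.lt_succ_self n)⟩

lemma extd_eq (n : ℕ) (d : Fin (n + 1) → Q) (i : ℕ) (h : i < n + 1) :
    extd n d i = d ⟨i, h⟩ := by
  unfold extd
  congr 1
  exact Fin.mk_eq_mk.mpr (min_eq_left (Nat.lt_succ_iff.1 h))

/-- Sum, over all `T`-avoiding paths of length `n` starting at `q`, of the path
probabilities. -/
noncomputable def pathSum (n : ℕ) (q : Q) : ℝ≥0∞ :=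
  ∑ d : Fin (n + 1) → Q,
    if d 0 = q ∧ ∀ i, d i ∉ T then
      chainPathProb κ q (List.ofFn fun j : Fin n => d j.succ) else 0

lemma pathSum_eq : ∀ n q, pathSum κ T n q = avoidP κ T n q := by
  intro n
  induction n with
  | zero =>
    intro q
    calc pathSum κ T 0 q
        = ∑ d : Fin 1 → Q, (if d 0 = q ∧ ∀ i, d i ∉ T then
            chainPathProb κ q (List.ofFn fun j : Fin 0 => d j.succ) else 0) := by rw [pathSum]
      _ = ∑ a : Q, (if (fun _ : Fin 1 => a) 0 = q ∧ (∀ i : Fin 1, (fun _ : Fin 1 => a) i ∉ T) then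
            chainPathProb κ q (List.ofFn fun j : Fin 0 => (fun _ : Fin 1 => a) j.succ) else 0) :=
          (Equiv.sum_comp (Equiv.funUnique (Fin 1) Q).symm _).symm
      _ = ∑ a : Q, (if a = q then (if q ∉ T then 1 else 0) else 0) := by
          refine Finset.sum_congr rfl fun a _ => ?_
          by_cases haq : a = q
          · subst haq
            by_cases haT : a ∈ T
            · simp [haT]
            · simp [haT, chainPathProb]
          · simp [haq]
      _ = avoidP κ T 0 q := by
          rw [Finset.sum_ite_eq' Finset.univ q]
          by_cases hq : q ∈ T <;> simp [avoidP, hq]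
  | succ n ih =>
    intro q
    have key : ∀ (a : Q) (e : Fin (n + 1) → Q),
        (if (Fin.cons a e : Fin (n + 2) → Q) 0 = q ∧
            (∀ i : Fin (n + 2), (Fin.cons a e : Fin (n + 2) → Q) i ∉ T) then
          chainPathProb κ q (List.ofFn fun j : Fin (n + 1) =>
            (Fin.cons a e : Fin (n + 2) → Q) j.succ) else 0) =
        if a = q then (if q ∉ T ∧ ∀ i, e i ∉ T then
          κ q (e 0) * chainPathProb κ (e 0) (List.ofFn fun j : Fin n => e j.succ) else 0)
          else 0 := by
      intro a e
      have hforall : (∀ i : Fin (n + 2), (Fin.cons a e : Fin (n + 2) → Q) i ∉ T) ↔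
          a ∉ T ∧ ∀ i : Fin (n + 1), e i ∉ T := by
        rw [Fin.forall_fin_succ]
        simp [Fin.cons_zero, Fin.cons_succ]
      have hofn : (List.ofFn fun j : Fin (n + 1) => (Fin.cons a e : Fin (n + 2) → Q) j.succ) =
          List.ofFn e :=
        congrArg List.ofFn (funext fun j => Fin.cons_succ (α := fun _ : Fin (n + 2) => Q) a e j)
      by_cases haq : a = q
      · subst haq
        by_cases hcond : a ∉ T ∧ ∀ i : Fin (n + 1), e i ∉ T
        · rw [if_pos ⟨rfl, hforall.2 hcond⟩, if_pos rfl, if_pos hcond, hofn, List.ofFn_succ,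
            chainPathProb]
        · rw [if_neg (by rw [Fin.cons_zero, hforall]; tauto), if_pos rfl, if_neg hcond]
      · rw [if_neg (by rw [Fin.cons_zero]; tauto), if_neg haq]
    calc pathSum κ T (n + 1) q
        = ∑ d : Fin (n + 2) → Q, (if d 0 = q ∧ ∀ i, d i ∉ T then
            chainPathProb κ q (List.ofFn fun j : Fin (n + 1) => d j.succ) else 0) := by
          rw [pathSum]
      _ = ∑ p : Q × (Fin (n + 1) → Q),
            (if (Fin.cons p.1 p.2 : Fin (n + 2) → Q) 0 = q ∧
                (∀ i : Fin (n + 2), (Fin.cons p.1 p.2 : Fin (n + 2) → Q) i ∉ T) then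
              chainPathProb κ q (List.ofFn fun j : Fin (n + 1) =>
                (Fin.cons p.1 p.2 : Fin (n + 2) → Q) j.succ) else 0) :=
          (Equiv.sum_comp (Fin.consEquiv fun _ : Fin (n + 2) => Q) _).symm
      _ = ∑ p : Q × (Fin (n + 1) → Q),
            (if p.1 = q then (if q ∉ T ∧ ∀ i, p.2 i ∉ T then
              κ q (p.2 0) * chainPathProb κ (p.2 0)
                (List.ofFn fun j : Fin n => p.2 j.succ) else 0) else 0) :=
          Finset.sum_congr rfl fun p _ => key p.1 p.2
      _ = ∑ e : Fin (n + 1) → Q, ∑ a : Q,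
            (if a = q then (if q ∉ T ∧ ∀ i, e i ∉ T then
              κ q (e 0) * chainPathProb κ (e 0)
                (List.ofFn fun j : Fin n => e j.succ) else 0) else 0) := by
          rw [Fintype.sum_prod_type]
          exact Finset.sum_comm
      _ = ∑ e : Fin (n + 1) → Q, (if q ∉ T ∧ ∀ i, e i ∉ T then
              κ q (e 0) * chainPathProb κ (e 0)
                (List.ofFn fun j : Fin n => e j.succ) else 0) := by
          refine Finset.sum_congr rfl fun e _ => ?_
          rw [Finset.sum_ite_eq' Finset.univ q]
          simp
      _ = avoidP κ T (n + 1) q := by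
          by_cases hq : q ∈ T
          · simp [avoidP, hq]
          · rw [show avoidP κ T (n + 1) q = ∑ q' : Q, κ q q' * avoidP κ T n q' from
              by simp [avoidP, hq]]
            have h2 : ∀ q' : Q, κ q q' * avoidP κ T n q' =
                ∑ e : Fin (n + 1) → Q, (if e 0 = q' ∧ ∀ i, e i ∉ T then
                  κ q q' * chainPathProb κ q' (List.ofFn fun j : Fin n => e j.succ) else 0) := by
              intro q'
              rw [← ih q', pathSum, Finset.mul_sum]
              refine Finset.sum_congr rfl fun e _ => ?_
              by_cases hcond : e 0 = q' ∧ ∀ i, e i ∉ T <;> simp [hcond]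
            calc ∑ e : Fin (n + 1) → Q, (if q ∉ T ∧ ∀ i, e i ∉ T then
                    κ q (e 0) * chainPathProb κ (e 0)
                      (List.ofFn fun j : Fin n => e j.succ) else 0)
                = ∑ e : Fin (n + 1) → Q, ∑ q' : Q,
                    (if e 0 = q' ∧ ∀ i, e i ∉ T then
                      κ q q' * chainPathProb κ q'
                        (List.ofFn fun j : Fin n => e j.succ) else 0) := by
                  refine Finset.sum_congr rfl fun e _ => ?_
                  have h3 : ∀ q' : Q, (if e 0 = q' ∧ ∀ i, e i ∉ T then
                      κ q q' * chainPathProb κ q' (List.ofFn fun j : Fin n => e j.succ) else 0) =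
                      if e 0 = q' then (if ∀ i, e i ∉ T then
                        κ q (e 0) * chainPathProb κ (e 0)
                          (List.ofFn fun j : Fin n => e j.succ) else 0) else 0 := by
                    intro q'
                    by_cases h : e 0 = q'
                    · subst h; simp
                    · simp [h]
                  rw [Finset.sum_congr rfl fun q' _ => h3 q', Finset.sum_ite_eq Finset.univ (e 0)]
                  simp [hq]
                _ = ∑ q' : Q, κ q q' * avoidP κ T n q' := by
                  rw [Finset.sum_comm]
                  exact (Finset.sum_congr rfl fun q' _ => (h2 q').symm)

end Aux

/-- Almost-sure reachability in finite Markov chains: if every closed recurrent set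
intersects `T`, then from every start state the chain reaches `T` with
probability 1. -/
theorem chain_reach_of_closed_recurrent [Fintype Q] [Nonempty Q]
    [MeasurableSpace Q] [MeasurableSingletonClass Q]
    (κ : Q → PMF Q) (T : Set Q)
    (hT : ∀ U : Set Q, IsClosedRecurrent κ U → (U ∩ T).Nonempty)
    (s : Q) (μ : Measure (ℕ → Q)) (hμ : IsChainTrajMeasure κ s μ) :
    μ {ρ | ∃ n, ρ n ∈ T} = 1 := by
  obtain ⟨hprob, hcyl⟩ := hμ
  haveI := hprob
  have hTmeas : MeasurableSet T := (Set.toFinite T).measurableSet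
  have htarget : MeasurableSet {ρ : ℕ → Q | ∃ n, ρ n ∈ T} := by
    have h : {ρ : ℕ → Q | ∃ n, ρ n ∈ T} = ⋃ n, (fun ρ : ℕ → Q => ρ n) ⁻¹' T := by
      ext ρ; simp
    rw [h]
    exact MeasurableSet.iUnion fun n => (measurable_pi_apply n) hTmeas
  rw [← prob_compl_eq_zero_iff htarget]
  set E : Set (ℕ → Q) := (fun ρ : ℕ → Q => ρ 0) ⁻¹' {s} with hE
  have hEmeas : MeasurableSet E := (measurable_pi_apply 0) (measurableSet_singleton s)
  have hEone : μ E = 1 := by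
    have h0 := hcyl 0 (fun _ => s)
    have hset : {ρ : ℕ → Q | ∀ i ≤ 0, ρ i = s} = E := by
      ext ρ
      constructor
      · intro h; exact h 0 le_rfl
      · intro h i hi
        have : i = 0 := Nat.le_zero.1 hi
        rw [this]; exact h
    rw [hset] at h0
    simpa [chainPathProb] using h0
  have hEc : μ Eᶜ = 0 := by
    rw [measure_compl hEmeas (measure_ne_top μ E), hEone, measure_univ, tsub_self]
  have hcompl : ∀ n : ℕ, μ {ρ : ℕ → Q | ∃ m, ρ m ∈ T}ᶜ ≤ avoidP κ T n s := by
    intro n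
    have hsub : {ρ : ℕ → Q | ∃ m, ρ m ∈ T}ᶜ ⊆ {ρ : ℕ → Q | ∀ i ≤ n, ρ i ∉ T} := by
      intro ρ hρ i _ h
      exact hρ ⟨i, h⟩
    refine le_trans (measure_mono hsub) ?_
    rw [← pathSum_eq κ T n s]
    set A := {ρ : ℕ → Q | ∀ i ≤ n, ρ i ∉ T} with hA
    set C : (Fin (n + 1) → Q) → Set (ℕ → Q) := fun d => {ρ | ∀ i ≤ n, ρ i = extd n d i} with hC
    have hcover : A ∩ E ⊆ ⋃ d : Fin (n + 1) → Q, (C d ∩ (A ∩ E)) := by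
      intro ρ hρ
      refine Set.mem_iUnion.2 ⟨fun i => ρ i, ⟨?_, hρ⟩⟩
      intro i hi
      rw [extd_eq n _ i (Nat.lt_succ_of_le hi)]
    have hbound : ∀ d : Fin (n + 1) → Q, μ (C d ∩ (A ∩ E)) ≤
        (if d 0 = s ∧ ∀ i, d i ∉ T then
          chainPathProb κ s (List.ofFn fun j : Fin n => d j.succ) else 0) := by
      intro d
      have hext0 : extd n d 0 = d 0 :=
        (extd_eq n d 0 (Nat.succ_pos n)).trans (congrArg d (Fin.ext (by simp)))
      by_cases hcond : d 0 = s ∧ ∀ i, d i ∉ T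
      · rw [if_pos hcond]
        refine le_trans (measure_mono Set.inter_subset_left) ?_
        have hcylval := hcyl n (extd n d)
        have hlist : ((List.range n).map fun i => extd n d (i + 1)) =
            List.ofFn fun j : Fin n => d j.succ := by
          apply List.ext_getElem
          · simp
          · intro i h1 h2
            simp only [List.getElem_map, List.getElem_range, List.getElem_ofFn]
            have hi : i < n := by simpa using h1
            rw [extd_eq n d (i + 1) (by omega)]
            exact congrArg d (Fin.ext (by simp))
        rw [hext0, hcond.1, if_pos rfl, hlist] at hcylval
        exact le_of_eq hcylval
      · rw [if_neg hcond]
        by_cases h0 : d 0 = s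
        · have hiT : ∃ i : Fin (n + 1), d i ∈ T := by
            by_contra h
            push_neg at h
            exact hcond ⟨h0, fun i => h i⟩
          obtain ⟨i, hiT⟩ := hiT
          have hempty : C d ∩ (A ∩ E) = ∅ := by
            ext ρ
            simp only [Set.mem_inter_iff, Set.mem_empty_iff_false, iff_false, not_and]
            intro hcd hAρ
            exfalso
            have hle : (i : ℕ) ≤ n := Nat.lt_succ_iff.1 i.isLt
            have h1 : ρ i = extd n d i := hcd i hle
            have h2 : extd n d (i : ℕ) = d i := by
              rw [extd_eq n d i i.isLt]
            exact hAρ (i : ℕ) hle (by rw [h1, h2]; exact hiT)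
          rw [hempty]
          simp
        · have hcylval := hcyl n (extd n d)
          rw [hext0, if_neg h0] at hcylval
          exact le_trans (measure_mono Set.inter_subset_left) (le_of_eq hcylval)
    calc μ A = μ (A ∩ E) + μ (A \ E) := (measure_inter_add_diff A hEmeas).symm
      _ ≤ μ (⋃ d : Fin (n + 1) → Q, (C d ∩ (A ∩ E))) + μ Eᶜ :=
        add_le_add (measure_mono hcover) (measure_mono fun ρ h => h.2)
      _ ≤ (∑' d : Fin (n + 1) → Q, μ (C d ∩ (A ∩ E))) + 0 :=
        add_le_add (measure_iUnion_le _) (le_of_eq hEc)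
      _ = ∑ d : Fin (n + 1) → Q, μ (C d ∩ (A ∩ E)) := by rw [add_zero, tsum_fintype]
      _ ≤ ∑ d : Fin (n + 1) → Q, (if d 0 = s ∧ ∀ i, d i ∉ T then
          chainPathProb κ s (List.ofFn fun j : Fin n => d j.succ) else 0) :=
        Finset.sum_le_sum fun d _ => hbound d
      _ = pathSum κ T n s := by rw [pathSum]
  choose nf hnf using exists_avoidP_lt_one κ T hT
  set N := Finset.univ.sup nf with hN
  have hMN : Mb κ T N < 1 := by
    rw [Mb]
    refine (Finset.sup_lt_iff (by simp : (⊥ : ℝ≥0∞) < 1)).2 fun q _ => ?_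
    exact lt_of_le_of_lt (avoidP_antitone κ T q (Finset.le_sup (Finset.mem_univ q))) (hnf q)
  have hle : ∀ k : ℕ, μ {ρ : ℕ → Q | ∃ m, ρ m ∈ T}ᶜ ≤ (Mb κ T N) ^ k := fun k =>
    le_trans (hcompl (k * N))
      (le_trans (avoidP_le_Mb κ T (k * N) s) (Mb_pow κ T N k))
  have htend := ENNReal.tendsto_pow_atTop_nhds_zero_of_lt_one hMN
  exact le_antisymm (ge_of_tendsto' htend hle) (zero_le)

end MPP
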